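/- The sequential use of minority reserves rule is not minority fair: there exist a finite set of workers W, a subset M ⊆ W, an injective score function s, a minority ratio m with 0 ≤ m ≤ 1, and a sequence of hires λ = ⟨q₁,q₂⟩ with q₁+q₂ ≤ |W|, such that the set φ^SM(W,λ) is not minority fair. -/

import Mathlib

open Finset

variable {ι : Type*} [DecidableEq ι]

/-- The (up to) `k` highest-scoring elements of `X`, chosen greedily
(with injective scores this is the set of the `k` highest-scoring elements). -/
noncomputable def topOf (s : ι → ℝ) : ℕ → Finset ι → Finset ι
  | 0, _ => ∅
  | k + 1, X =>
    if h : X.Nonempty then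
      insert (X.exists_max_image s h).choose
        (topOf s k (X.erase (X.exists_max_image s h).choose))
    else ∅

/-- `H` respects minority rights for quota `q` (w.r.t. minorities `M` and ratio `m`):
either `|M| ≥ m·q` and the fraction of minorities in `H` is at least `m`
(stated multiplicatively as `ω(H) ≥ m·|H|`), or `|M| < m·q` and `M ⊆ H`. -/
def RespectsRightsSet (M : Finset ι) (m : ℝ) (q : ℕ) (H : Finset ι) : Prop :=
  (m * (q : ℝ) ≤ (M.card : ℝ) ∧ m * (H.card : ℝ) ≤ ((H ∩ M).card : ℝ)) ∨
  ((M.card : ℝ) < m * (q : ℝ) ∧ M ⊆ H)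

/-- `H` is minority fair (w.r.t. workers `W`, minorities `M`, scores `s`, ratio `m`):
(i) within `M` and within `W ∖ M` selection follows the scores; (ii) no minority with a
higher score is left out while a non-minority is hired; (iii) a lower-scoring minority is
hired over a higher-scoring non-minority only if the minority fraction of `H` is at most
`m` (stated multiplicatively as `ω(H) ≤ m·|H|`). -/
def MinorityFairSet (W M : Finset ι) (s : ι → ℝ) (m : ℝ) (H : Finset ι) : Prop :=
  (∀ w ∈ M, ∀ w' ∈ M, w ∈ H → w' ∉ H → s w' < s w) ∧
  (∀ w ∈ W \ M, ∀ w' ∈ W \ M, w ∈ H → w' ∉ H → s w' < s w) ∧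
  (∀ w ∈ W \ M, ∀ w' ∈ M, s w < s w' → w ∈ H → w' ∈ H) ∧
  ((∃ w ∈ W \ M, ∃ w' ∈ M, s w' < s w ∧ w ∉ H ∧ w' ∈ H) →
    ((H ∩ M).card : ℝ) ≤ m * (H.card : ℝ))

/-- One round of the minority reserves choice from pool `P`: the `min(⌈m·q⌉, |M ∩ P|)`
highest-scoring available minority workers, then the highest-scoring remaining available
workers filling up to `q` hires in total. -/
noncomputable def smRound (M : Finset ι) (s : ι → ℝ) (m : ℝ) (P : Finset ι) (q : ℕ) :
    Finset ι :=
  let A1 := topOf s (min ⌈m * (q : ℝ)⌉₊ (P ∩ M).card) (P ∩ M)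
  A1 ∪ topOf s (q - A1.card) (P \ A1)

/-- The sequential use of minority reserves rule `φ^SM`. -/
noncomputable def phiSM (M : Finset ι) (s : ι → ℝ) (m : ℝ) : Finset ι → List ℕ → Finset ι
  | _, [] => ∅
  | P, q :: rest => smRound M s m P q ∪ phiSM M s m (P \ smRound M s m P q) rest

lemma topOf_one_eq {s : ι → ℝ} {X : Finset ι} {a : ι}
    (ha : a ∈ X) (hmax : ∀ b ∈ X, b ≠ a → s b < s a) : topOf s 1 X = {a} := by
  have h : X.Nonempty := ⟨a, ha⟩
  obtain ⟨hc, hcmax⟩ := (X.exists_max_image s h).choose_spec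
  have hca : (X.exists_max_image s h).choose = a := by
    by_contra hne
    exact absurd (hcmax a ha) (not_le.mpr (hmax _ hc hne))
  rw [topOf, dif_pos h, hca, topOf]
  rfl

lemma smRound_eq (M : Finset ι) (s : ι → ℝ) (m : ℝ) (P : Finset ι) (q : ℕ) :
    smRound M s m P q =
      topOf s (min ⌈m * (q : ℝ)⌉₊ (P ∩ M).card) (P ∩ M) ∪
        topOf s (q - (topOf s (min ⌈m * (q : ℝ)⌉₊ (P ∩ M).card) (P ∩ M)).card)
          (P \ topOf s (min ⌈m * (q : ℝ)⌉₊ (P ∩ M).card) (P ∩ M)) := rfl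

/-- The sequential use of minority reserves rule is not minority fair:
there is a hiring problem and a two-round sequence of hires `⟨q₁,q₂⟩` with
`q₁+q₂ ≤ |W|` such that `φ^SM(W,⟨q₁,q₂⟩)` is not minority fair. -/
theorem phiSM_not_minority_fair :
    ∃ (W M : Finset ℕ) (s : ℕ → ℝ) (m : ℝ) (q₁ q₂ : ℕ),
      M ⊆ W ∧ Set.InjOn s ↑W ∧ 0 ≤ m ∧ m ≤ 1 ∧ q₁ + q₂ ≤ W.card ∧
      ¬ MinorityFairSet W M s m (phiSM M s m W [q₁, q₂]) := by
  refine ⟨{0,1,2,3}, {0,3}, fun n : ℕ => (n : ℝ), 1/2, 1, 2, by decide,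
    fun a _ b _ h => Nat.cast_injective h, by norm_num, by norm_num, by decide, ?_⟩
  have hs0 : ∀ b ∈ ({0,3} : Finset ℕ), b ≠ 3 → ((b : ℝ)) < ((3:ℕ) : ℝ) := by
    intro b hb hne
    fin_cases hb <;> simp_all
  have ht1 : topOf (fun n : ℕ => (n : ℝ)) 1 ({0,3} : Finset ℕ) = {3} :=
    topOf_one_eq (by decide) hs0
  have hr1 : smRound ({0,3} : Finset ℕ) (fun n : ℕ => (n : ℝ)) (1/2) {0,1,2,3} 1 = {3} := by
    rw [smRound_eq]
    have h1 : ({0,1,2,3} : Finset ℕ) ∩ {0,3} = {0,3} := by decide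
    have h2 : min ⌈(1/2 : ℝ) * ((1:ℕ) : ℝ)⌉₊ ({0,3} : Finset ℕ).card = 1 := by
      norm_num [Nat.ceil_eq_iff]
    rw [h1, h2, ht1]
    norm_num [topOf]
  have ht2 : topOf (fun n : ℕ => (n : ℝ)) 1 ({0} : Finset ℕ) = {0} :=
    topOf_one_eq (by decide) (by intro b hb hne; fin_cases hb; simp at hne)
  have ht3 : topOf (fun n : ℕ => (n : ℝ)) 1 ({1,2} : Finset ℕ) = {2} :=
    topOf_one_eq (by decide) (by intro b hb hne; fin_cases hb <;> simp_all)
  have hr2 : smRound ({0,3} : Finset ℕ) (fun n : ℕ => (n : ℝ)) (1/2) {0,1,2} 2 = {0,2} := by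
    rw [smRound_eq]
    have h1 : ({0,1,2} : Finset ℕ) ∩ {0,3} = {0} := by decide
    have h2 : min ⌈(1/2 : ℝ) * ((2:ℕ) : ℝ)⌉₊ ({0} : Finset ℕ).card = 1 := by
      norm_num [Nat.ceil_eq_iff]
    rw [h1, h2, ht2]
    have h3 : ({0,1,2} : Finset ℕ) \ {0} = {1,2} := by decide
    have h4 : 2 - ({0} : Finset ℕ).card = 1 := by decide
    rw [h3, h4, ht3]
    decide
  have hH : phiSM ({0,3} : Finset ℕ) (fun n : ℕ => (n : ℝ)) (1/2) {0,1,2,3} [1, 2]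
      = {0,2,3} := by
    rw [phiSM, phiSM, phiSM, hr1]
    have h5 : ({0,1,2,3} : Finset ℕ) \ {3} = {0,1,2} := by decide
    rw [h5, hr2]
    decide
  rw [hH]
  rintro ⟨-, -, -, h4⟩
  have := h4 ⟨1, by decide, 0, by decide, by norm_num, by decide, by decide⟩
  have hi : (({0,2,3} : Finset ℕ) ∩ {0,3}).card = 2 := by decide
  have hc : ({0,2,3} : Finset ℕ).card = 3 := by decide
  rw [hi, hc] at this
  norm_num at this
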